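/- Let (X_i)_{i∈ℤ} be integrable random variables, each F_∞-measurable with E(X_i | F_{-∞}) = 0 for a filtration (F_i). Suppose for every k the series V_k = Σ_{i≥0} E(X_{k+i} | F_{k−1}) and W_k = Σ_{i≥1} [X_{k−i} − E(X_{k−i} | F_{k−1})] converge in L¹. Define U_k = V_k − W_k and Y_k = X_k − U_k + U_{k+1}. Then (Y_k) is a martingale difference sequence with respect to (F_k), i.e. Y_k is F_k-measurable and E(Y_k | F_{k−1}) = 0, and X_k = Y_k + U_k − U_{k+1} for all k. -/

import Mathlib

open MeasureTheory Filter Finset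
open scoped ENNReal Topology

private lemma aux_aesm_of_tendsto
    {Ω : Type*} {m m0 : MeasurableSpace Ω} (hm : m ≤ m0) {μ : Measure Ω}
    {f : ℕ → Ω → ℝ} {g : Ω → ℝ} (hf : ∀ n, Measurable[m] (f n))
    (h : ∀ᵐ ω ∂μ, Tendsto (fun n => f n ω) atTop (𝓝 (g ω))) :
    AEStronglyMeasurable[m] g μ := by
  have hS : MeasurableSet[m] {ω | ∃ l, Tendsto (fun n => f n ω) atTop (𝓝 l)} :=
    @StronglyMeasurable.measurableSet_exists_tendsto ℕ Ω ℝ m _ _ atTop _ f _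
      (fun n => (hf n).stronglyMeasurable)
  have h_ex : ∀ᵐ ω ∂μ.trim hm, ∃ l, Tendsto (fun n => f n ω) atTop (𝓝 l) := by
    rw [ae_iff]
    have h0 : μ {ω | ¬ ∃ l, Tendsto (fun n => f n ω) atTop (𝓝 l)} = 0 := by
      rw [← ae_iff]
      filter_upwards [h] with ω hω using ⟨g ω, hω⟩
    exact (trim_measurableSet_eq hm hS.compl).trans h0
  obtain ⟨f_lim, h_lim_meas, h_lim⟩ :=
    @measurable_limit_of_tendsto_metrizable_ae Ω ℝ m _ _ _ _ ℕ _ (μ.trim hm) f atTop _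
      (fun n => (hf n).aemeasurable) h_ex
  refine ⟨f_lim, h_lim_meas.stronglyMeasurable, ?_⟩
  have h_lim' : ∀ᵐ ω ∂μ, Tendsto (fun n => f n ω) atTop (𝓝 (f_lim ω)) :=
    ae_of_ae_trim hm h_lim
  filter_upwards [h, h_lim'] with ω h1 h2 using tendsto_nhds_unique h1 h2

set_option maxHeartbeats 1600000 in
theorem martingale_coboundary_sufficiency
    {Ω : Type*} {m0 : MeasurableSpace Ω} {μ : Measure Ω} [IsProbabilityMeasure μ]
    (𝓕 : Filtration ℤ m0) (X V W : ℤ → Ω → ℝ)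
    (hXint : ∀ i, Integrable (X i) μ)
    (hXmeas : ∀ i, AEStronglyMeasurable[⨆ j, 𝓕 j] (X i) μ)
    (hXtail : ∀ i, μ[X i | ⨅ j, 𝓕 j] =ᵐ[μ] 0)
    (hVint : ∀ k, Integrable (V k) μ)
    (hWint : ∀ k, Integrable (W k) μ)
    (hV : ∀ k : ℤ,
      Tendsto (fun N : ℕ =>
        eLpNorm (fun ω =>
          (∑ i ∈ Finset.range N, (μ[X (k + i) | 𝓕 (k - 1)]) ω) - V k ω) 1 μ)
        atTop (𝓝 0))
    (hW : ∀ k : ℤ,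
      Tendsto (fun N : ℕ =>
        eLpNorm (fun ω =>
          (∑ i ∈ Finset.range N,
            (X (k - (i + 1)) ω - (μ[X (k - (i + 1)) | 𝓕 (k - 1)]) ω)) - W k ω) 1 μ)
        atTop (𝓝 0))
    (U Y : ℤ → Ω → ℝ)
    (hU : ∀ k, U k = fun ω => V k ω - W k ω)
    (hY : ∀ k, Y k = fun ω => X k ω - U k ω + U (k + 1) ω) :
    ∀ k : ℤ,
      AEStronglyMeasurable[𝓕 k] (Y k) μ ∧
      μ[Y k | 𝓕 (k - 1)] =ᵐ[μ] 0 ∧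
      (X k = fun ω => Y k ω + U k ω - U (k + 1) ω) := by
  intro k
  have hle : 𝓕 (k - 1) ≤ 𝓕 k := 𝓕.mono (by omega)
  -- massaged hypotheses at k+1
  have hW1 : Tendsto (fun N : ℕ =>
      eLpNorm (fun ω =>
        (∑ i ∈ Finset.range N, (X (k - i) ω - (μ[X (k - i) | 𝓕 k]) ω)) - W (k + 1) ω) 1 μ)
      atTop (𝓝 0) := by
    have hidx1 : ∀ i : ℕ, k + 1 - ((i : ℤ) + 1) = k - i := fun i => by ring
    have hidx2 : (k + 1 - 1 : ℤ) = k := by ring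
    have := hW (k + 1)
    simp only [hidx1, hidx2] at this
    exact this
  have hV1 : Tendsto (fun N : ℕ =>
      eLpNorm (fun ω =>
        (∑ i ∈ Finset.range N, (μ[X (k + 1 + i) | 𝓕 k]) ω) - V (k + 1) ω) 1 μ)
      atTop (𝓝 0) := by
    have hidx2 : (k + 1 - 1 : ℤ) = k := by ring
    have := hV (k + 1)
    simp only [hidx2] at this
    exact this
  -- integrability of Y k
  have hYint : Integrable (Y k) μ := by
    simp only [hY, hU]
    exact ((hXint k).sub ((hVint k).sub (hWint k))).add ((hVint (k + 1)).sub (hWint (k + 1)))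
  -- the approximating martingale-difference partial sums
  set T : ℕ → Ω → ℝ := fun N ω =>
    (∑ i ∈ Finset.range N, ((μ[X (k + i) | 𝓕 k]) ω - (μ[X (k + i) | 𝓕 (k - 1)]) ω)) +
    (∑ i ∈ Finset.range N,
      ((μ[X (k - (i + 1)) | 𝓕 k]) ω - (μ[X (k - (i + 1)) | 𝓕 (k - 1)]) ω)) with hTdef
  have hTmeas : ∀ N, Measurable[𝓕 k] (T N) := by
    intro N
    refine Measurable.add ?_ ?_ <;>
      exact Finset.measurable_sum _ fun i _ =>
        (stronglyMeasurable_condExp.measurable.sub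
          ((stronglyMeasurable_condExp.mono hle).measurable))
  have hTint : ∀ N, Integrable (T N) μ := by
    intro N
    refine Integrable.add ?_ ?_ <;>
      exact integrable_finset_sum _ fun i _ => integrable_condExp.sub integrable_condExp
  -- key algebraic identity
  have key : ∀ (N : ℕ) (ω : Ω),
      T N ω
        = (X k ω
            - (∑ i ∈ Finset.range N, (X (k - i) ω - (μ[X (k - i) | 𝓕 k]) ω))
            + (∑ i ∈ Finset.range N,
                (X (k - (i + 1)) ω - (μ[X (k - (i + 1)) | 𝓕 (k - 1)]) ω))
            - (∑ i ∈ Finset.range N, (μ[X (k + i) | 𝓕 (k - 1)]) ω)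
            + (∑ i ∈ Finset.range N, (μ[X (k + 1 + i) | 𝓕 k]) ω))
          - (X (k - N) ω - (μ[X (k - N) | 𝓕 k]) ω)
          - (μ[X (k + N) | 𝓕 k]) ω := by
    intro N ω
    induction N with
    | zero => simp [hTdef]
    | succ n ih =>
      simp only [hTdef] at ih ⊢
      simp only [Finset.sum_range_succ]
      push_cast
      have c3 : (k + 1 + (n : ℤ)) = k + ((n : ℤ) + 1) := by ring
      rw [c3]
      linear_combination ih
  -- expansion of Y k
  have hYk : ∀ ω, Y k ω = X k ω - V k ω + W k ω + (V (k + 1) ω - W (k + 1) ω) := by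
    intro ω
    simp only [hY, hU]
    ring
  -- decomposition of T N - Y k
  have hdecomp : ∀ N : ℕ, (fun ω => T N ω - Y k ω)
      = (fun ω => W (k + 1) ω
            - ∑ i ∈ Finset.range N, (X (k - i) ω - (μ[X (k - i) | 𝓕 k]) ω))
        + ((fun ω => (∑ i ∈ Finset.range N,
              (X (k - (i + 1)) ω - (μ[X (k - (i + 1)) | 𝓕 (k - 1)]) ω)) - W k ω)
        + ((fun ω => V k ω - ∑ i ∈ Finset.range N, (μ[X (k + i) | 𝓕 (k - 1)]) ω)
        + ((fun ω => (∑ i ∈ Finset.range N, (μ[X (k + 1 + i) | 𝓕 k]) ω) - V (k + 1) ω)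
        + ((fun ω => -(X (k - N) ω - (μ[X (k - N) | 𝓕 k]) ω))
        + (fun ω => -((μ[X (k + N) | 𝓕 k]) ω)))))) := by
    intro N
    funext ω
    simp only [Pi.add_apply]
    rw [key N ω, hYk ω]
    ring
  -- integrability of the six pieces
  have i1 : ∀ N : ℕ, Integrable (fun ω => W (k + 1) ω
      - ∑ i ∈ Finset.range N, (X (k - i) ω - (μ[X (k - i) | 𝓕 k]) ω)) μ := fun N =>
    (hWint (k + 1)).sub (integrable_finset_sum _ fun i _ => (hXint _).sub integrable_condExp)
  have i2 : ∀ N : ℕ, Integrable (fun ω => (∑ i ∈ Finset.range N,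
      (X (k - (i + 1)) ω - (μ[X (k - (i + 1)) | 𝓕 (k - 1)]) ω)) - W k ω) μ := fun N =>
    (integrable_finset_sum _ fun i _ => (hXint _).sub integrable_condExp).sub (hWint k)
  have i3 : ∀ N : ℕ, Integrable (fun ω => V k ω
      - ∑ i ∈ Finset.range N, (μ[X (k + i) | 𝓕 (k - 1)]) ω) μ := fun N =>
    (hVint k).sub (integrable_finset_sum _ fun i _ => integrable_condExp)
  have i4 : ∀ N : ℕ, Integrable (fun ω =>
      (∑ i ∈ Finset.range N, (μ[X (k + 1 + i) | 𝓕 k]) ω) - V (k + 1) ω) μ := fun N =>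
    (integrable_finset_sum _ fun i _ => integrable_condExp).sub (hVint (k + 1))
  have i5 : ∀ N : ℕ, Integrable (fun ω => -(X (k - N) ω - (μ[X (k - N) | 𝓕 k]) ω)) μ :=
    fun N => ((hXint _).sub integrable_condExp).neg
  have i6 : ∀ N : ℕ, Integrable (fun ω => -((μ[X (k + N) | 𝓕 k]) ω)) μ :=
    fun N => integrable_condExp.neg
  -- the norm bound
  have hb : ∀ N : ℕ, eLpNorm (fun ω => T N ω - Y k ω) 1 μ ≤
      eLpNorm (fun ω => W (k + 1) ω
          - ∑ i ∈ Finset.range N, (X (k - i) ω - (μ[X (k - i) | 𝓕 k]) ω)) 1 μ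
      + (eLpNorm (fun ω => (∑ i ∈ Finset.range N,
            (X (k - (i + 1)) ω - (μ[X (k - (i + 1)) | 𝓕 (k - 1)]) ω)) - W k ω) 1 μ
      + (eLpNorm (fun ω => V k ω
            - ∑ i ∈ Finset.range N, (μ[X (k + i) | 𝓕 (k - 1)]) ω) 1 μ
      + (eLpNorm (fun ω =>
            (∑ i ∈ Finset.range N, (μ[X (k + 1 + i) | 𝓕 k]) ω) - V (k + 1) ω) 1 μ
      + (eLpNorm (fun ω => -(X (k - N) ω - (μ[X (k - N) | 𝓕 k]) ω)) 1 μ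
      + eLpNorm (fun ω => -((μ[X (k + N) | 𝓕 k]) ω)) 1 μ)))) := by
    intro N
    rw [hdecomp N]
    refine le_trans (eLpNorm_add_le (i1 N).1
      (((i2 N).add ((i3 N).add ((i4 N).add ((i5 N).add (i6 N))))).1) le_rfl) ?_
    refine add_le_add le_rfl (le_trans (eLpNorm_add_le (i2 N).1
      (((i3 N).add ((i4 N).add ((i5 N).add (i6 N)))).1) le_rfl) ?_)
    refine add_le_add le_rfl (le_trans (eLpNorm_add_le (i3 N).1
      (((i4 N).add ((i5 N).add (i6 N))).1) le_rfl) ?_)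
    refine add_le_add le_rfl (le_trans (eLpNorm_add_le (i4 N).1
      (((i5 N).add (i6 N)).1) le_rfl) ?_)
    exact add_le_add le_rfl (eLpNorm_add_le (i5 N).1 (i6 N).1 le_rfl)
  -- term convergences
  have htermW : Tendsto (fun N : ℕ =>
      eLpNorm (fun ω => X (k - N) ω - (μ[X (k - N) | 𝓕 k]) ω) 1 μ) atTop (𝓝 0) := by
    have hadd := (hW1.comp (tendsto_add_atTop_nat 1)).add hW1
    have hmid : Tendsto (fun N : ℕ =>
        eLpNorm (fun ω => (∑ i ∈ Finset.range (N + 1),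
          (X (k - i) ω - (μ[X (k - i) | 𝓕 k]) ω)) - W (k + 1) ω) 1 μ
        + eLpNorm (fun ω => (∑ i ∈ Finset.range N,
          (X (k - i) ω - (μ[X (k - i) | 𝓕 k]) ω)) - W (k + 1) ω) 1 μ)
        atTop (𝓝 0) := by simpa using hadd
    refine tendsto_of_tendsto_of_tendsto_of_le_of_le tendsto_const_nhds
      hmid (fun N => zero_le) (fun N => ?_)
    have hsplit : (fun ω => X (k - N) ω - (μ[X (k - N) | 𝓕 k]) ω)
        = (fun ω => (∑ i ∈ Finset.range (N + 1),
              (X (k - i) ω - (μ[X (k - i) | 𝓕 k]) ω)) - W (k + 1) ω)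
            - (fun ω => (∑ i ∈ Finset.range N,
              (X (k - i) ω - (μ[X (k - i) | 𝓕 k]) ω)) - W (k + 1) ω) := by
      funext ω
      simp only [Pi.sub_apply]
      rw [Finset.sum_range_succ]
      ring
    rw [hsplit]
    exact eLpNorm_sub_le
      (((integrable_finset_sum _ fun i _ =>
        (hXint _).sub integrable_condExp).sub (hWint (k + 1))).1)
      (((integrable_finset_sum _ fun i _ =>
        (hXint _).sub integrable_condExp).sub (hWint (k + 1))).1) le_rfl
  have htermV' : Tendsto (fun N : ℕ =>
      eLpNorm (μ[X (k + 1 + N) | 𝓕 k]) 1 μ) atTop (𝓝 0) := by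
    have hadd := (hV1.comp (tendsto_add_atTop_nat 1)).add hV1
    have hmid : Tendsto (fun N : ℕ =>
        eLpNorm (fun ω => (∑ i ∈ Finset.range (N + 1),
          (μ[X (k + 1 + i) | 𝓕 k]) ω) - V (k + 1) ω) 1 μ
        + eLpNorm (fun ω => (∑ i ∈ Finset.range N,
          (μ[X (k + 1 + i) | 𝓕 k]) ω) - V (k + 1) ω) 1 μ)
        atTop (𝓝 0) := by simpa using hadd
    refine tendsto_of_tendsto_of_tendsto_of_le_of_le tendsto_const_nhds
      hmid (fun N => zero_le) (fun N => ?_)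
    have hsplit : (μ[X (k + 1 + N) | 𝓕 k])
        = (fun ω => (∑ i ∈ Finset.range (N + 1),
              (μ[X (k + 1 + i) | 𝓕 k]) ω) - V (k + 1) ω)
            - (fun ω => (∑ i ∈ Finset.range N,
              (μ[X (k + 1 + i) | 𝓕 k]) ω) - V (k + 1) ω) := by
      funext ω
      simp only [Pi.sub_apply]
      rw [Finset.sum_range_succ]
      ring
    rw [hsplit]
    exact eLpNorm_sub_le
      (((integrable_finset_sum _ fun i _ => integrable_condExp).sub (hVint (k + 1))).1)
      (((integrable_finset_sum _ fun i _ => integrable_condExp).sub (hVint (k + 1))).1) le_rfl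
  have htermV : Tendsto (fun N : ℕ =>
      eLpNorm (μ[X (k + N) | 𝓕 k]) 1 μ) atTop (𝓝 0) := by
    rw [← tendsto_add_atTop_iff_nat 1]
    have hidx : ∀ n : ℕ, (k + ((n : ℤ) + 1)) = k + 1 + n := fun n => by ring
    simp only [Nat.cast_add, Nat.cast_one, hidx]
    exact htermV'
  -- the six tendsto statements matching hb
  have h1t : Tendsto (fun N : ℕ => eLpNorm (fun ω => W (k + 1) ω
      - ∑ i ∈ Finset.range N, (X (k - i) ω - (μ[X (k - i) | 𝓕 k]) ω)) 1 μ)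
      atTop (𝓝 0) := by
    have heq : ∀ N : ℕ, eLpNorm (fun ω => W (k + 1) ω
        - ∑ i ∈ Finset.range N, (X (k - i) ω - (μ[X (k - i) | 𝓕 k]) ω)) 1 μ
        = eLpNorm (fun ω => (∑ i ∈ Finset.range N,
            (X (k - i) ω - (μ[X (k - i) | 𝓕 k]) ω)) - W (k + 1) ω) 1 μ := fun N =>
      eLpNorm_sub_comm (fun ω => W (k + 1) ω)
        (fun ω => ∑ i ∈ Finset.range N, (X (k - i) ω - (μ[X (k - i) | 𝓕 k]) ω)) 1 μ
    simp only [heq]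
    exact hW1
  have h3t : Tendsto (fun N : ℕ => eLpNorm (fun ω => V k ω
      - ∑ i ∈ Finset.range N, (μ[X (k + i) | 𝓕 (k - 1)]) ω) 1 μ) atTop (𝓝 0) := by
    have heq : ∀ N : ℕ, eLpNorm (fun ω => V k ω
        - ∑ i ∈ Finset.range N, (μ[X (k + i) | 𝓕 (k - 1)]) ω) 1 μ
        = eLpNorm (fun ω => (∑ i ∈ Finset.range N,
            (μ[X (k + i) | 𝓕 (k - 1)]) ω) - V k ω) 1 μ := fun N =>
      eLpNorm_sub_comm (fun ω => V k ω)
        (fun ω => ∑ i ∈ Finset.range N, (μ[X (k + i) | 𝓕 (k - 1)]) ω) 1 μ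
    simp only [heq]
    exact hV k
  have h5t : Tendsto (fun N : ℕ =>
      eLpNorm (fun ω => -(X (k - N) ω - (μ[X (k - N) | 𝓕 k]) ω)) 1 μ) atTop (𝓝 0) := by
    have heq : ∀ N : ℕ, eLpNorm (fun ω => -(X (k - N) ω - (μ[X (k - N) | 𝓕 k]) ω)) 1 μ
        = eLpNorm (fun ω => X (k - N) ω - (μ[X (k - N) | 𝓕 k]) ω) 1 μ := fun N =>
      eLpNorm_neg (fun ω => X (k - N) ω - (μ[X (k - N) | 𝓕 k]) ω) 1 μ
    simp only [heq]
    exact htermW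
  have h6t : Tendsto (fun N : ℕ =>
      eLpNorm (fun ω => -((μ[X (k + N) | 𝓕 k]) ω)) 1 μ) atTop (𝓝 0) := by
    have heq : ∀ N : ℕ, eLpNorm (fun ω => -((μ[X (k + N) | 𝓕 k]) ω)) 1 μ
        = eLpNorm (μ[X (k + N) | 𝓕 k]) 1 μ := fun N =>
      eLpNorm_neg (fun ω => (μ[X (k + N) | 𝓕 k]) ω) 1 μ
    simp only [heq]
    exact htermV
  -- main L¹ convergence
  have hTY : Tendsto (fun N : ℕ => eLpNorm (fun ω => T N ω - Y k ω) 1 μ) atTop (𝓝 0) := by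
    have hsum := h1t.add ((hW k).add (h3t.add (hV1.add (h5t.add h6t))))
    refine tendsto_of_tendsto_of_tendsto_of_le_of_le tendsto_const_nhds
      (by simpa using hsum) (fun N => zero_le) hb
  -- measurability of Y k
  have hmeasY : AEStronglyMeasurable[𝓕 k] (Y k) μ := by
    have hin : TendstoInMeasure μ T atTop (Y k) :=
      tendstoInMeasure_of_tendsto_eLpNorm (p := (1 : ℝ≥0∞)) one_ne_zero
        (fun N => (hTint N).1) hYint.1 hTY
    obtain ⟨ns, -, hns⟩ := hin.exists_seq_tendsto_ae
    exact aux_aesm_of_tendsto (𝓕.le k) (fun n => hTmeas (ns n)) hns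
  -- conditional expectation of T N vanishes
  have hcondT : ∀ N : ℕ, (μ[T N | 𝓕 (k - 1)]) =ᵐ[μ] 0 := by
    intro N
    have hzero : ∀ j : ℤ,
        (μ[(μ[X j | 𝓕 k]) - (μ[X j | 𝓕 (k - 1)]) | 𝓕 (k - 1)]) =ᵐ[μ] 0 := by
      intro j
      refine (condExp_sub integrable_condExp integrable_condExp _).trans ?_
      have e1 : (μ[(μ[X j | 𝓕 k]) | 𝓕 (k - 1)]) =ᵐ[μ] μ[X j | 𝓕 (k - 1)] :=
        condExp_condExp_of_le hle (𝓕.le k)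
      have e2 : (μ[(μ[X j | 𝓕 (k - 1)]) | 𝓕 (k - 1)]) =ᵐ[μ] μ[X j | 𝓕 (k - 1)] :=
        condExp_condExp_of_le le_rfl (𝓕.le (k - 1))
      filter_upwards [e1, e2] with ω ha hb2
      simp [ha, hb2]
    have hTsum : T N
        = (∑ i ∈ Finset.range N,
            ((μ[X (k + i) | 𝓕 k]) - (μ[X (k + i) | 𝓕 (k - 1)])))
          + ∑ i ∈ Finset.range N,
            ((μ[X (k - (i + 1)) | 𝓕 k]) - (μ[X (k - (i + 1)) | 𝓕 (k - 1)])) := by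
      funext ω
      simp [hTdef, Finset.sum_apply, Pi.sub_apply]
    rw [hTsum]
    have hintsum1 : Integrable (∑ i ∈ Finset.range N,
        ((μ[X (k + i) | 𝓕 k]) - (μ[X (k + i) | 𝓕 (k - 1)]))) μ :=
      integrable_finset_sum' _ fun i _ => integrable_condExp.sub integrable_condExp
    have hintsum2 : Integrable (∑ i ∈ Finset.range N,
        ((μ[X (k - (i + 1)) | 𝓕 k]) - (μ[X (k - (i + 1)) | 𝓕 (k - 1)]))) μ :=
      integrable_finset_sum' _ fun i _ => integrable_condExp.sub integrable_condExp
    refine (condExp_add hintsum1 hintsum2 _).trans ?_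
    have hA : (μ[∑ i ∈ Finset.range N,
        ((μ[X (k + i) | 𝓕 k]) - (μ[X (k + i) | 𝓕 (k - 1)])) | 𝓕 (k - 1)])
        =ᵐ[μ] 0 := by
      refine (condExp_finsetSum (fun i _ =>
        integrable_condExp.sub integrable_condExp) _).trans ?_
      refine (eventuallyEq_sum fun (i : ℕ) _ => hzero (k + i)).trans ?_
      simp
    have hB : (μ[∑ i ∈ Finset.range N,
        ((μ[X (k - (i + 1)) | 𝓕 k]) - (μ[X (k - (i + 1)) | 𝓕 (k - 1)])) |
          𝓕 (k - 1)]) =ᵐ[μ] 0 := by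
      refine (condExp_finsetSum (fun i _ =>
        integrable_condExp.sub integrable_condExp) _).trans ?_
      refine (eventuallyEq_sum fun (i : ℕ) _ => hzero (k - (i + 1))).trans ?_
      simp
    filter_upwards [hA, hB] with ω ha hb2
    simp only [Pi.add_apply, Pi.zero_apply] at ha hb2 ⊢
    rw [ha, hb2, add_zero]
  -- conditional expectation of Y k vanishes
  have hcond : (μ[Y k | 𝓕 (k - 1)]) =ᵐ[μ] 0 := by
    have hbound2 : ∀ N : ℕ, eLpNorm (μ[Y k | 𝓕 (k - 1)]) 1 μ
        ≤ eLpNorm (fun ω => T N ω - Y k ω) 1 μ := by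
      intro N
      have h1 : (μ[(fun ω => T N ω - Y k ω) | 𝓕 (k - 1)]) =ᵐ[μ] -(μ[Y k | 𝓕 (k - 1)]) := by
        have h2 : (μ[T N - Y k | 𝓕 (k - 1)]) =ᵐ[μ] -(μ[Y k | 𝓕 (k - 1)]) := by
          refine (condExp_sub (hTint N) hYint _).trans ?_
          filter_upwards [hcondT N] with ω h0
          simp [h0]
        exact h2
      calc eLpNorm (μ[Y k | 𝓕 (k - 1)]) 1 μ
          = eLpNorm (μ[(fun ω => T N ω - Y k ω) | 𝓕 (k - 1)]) 1 μ := by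
            rw [eLpNorm_congr_ae h1, eLpNorm_neg]
        _ ≤ eLpNorm (fun ω => T N ω - Y k ω) 1 μ := eLpNorm_one_condExp_le_eLpNorm _
    have h0 : eLpNorm (μ[Y k | 𝓕 (k - 1)]) 1 μ = 0 :=
      le_antisymm (ge_of_tendsto' hTY hbound2) (zero_le)
    exact (eLpNorm_eq_zero_iff
      (stronglyMeasurable_condExp.mono (𝓕.le _)).aestronglyMeasurable one_ne_zero).1 h0
  refine ⟨hmeasY, hcond, ?_⟩
  funext ω
  simp only [hY]
  ring
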